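/- Let r ≥ 0 and let Q = Σ_{m+ℓ=r} c_{m,ℓ} / (g^m (2g-3+n)_ℓ) be a real linear combination of the functions Q_{m,ℓ} with m+ℓ = r. If there exist constants g₀, C, λ > 0 such that |Q(g,n)| < C/g^{r+1} for all integers g ≥ g₀ and all integers 1 ≤ n ≤ λg, then all coefficients c_{m,ℓ} vanish, i.e., Q = 0. -/

import Mathlib

/-- `Q_{m,ℓ}(g,n) = 1/(g^m (2g-3+n)_ℓ)` where `(x)_ℓ` is the falling factorial. -/
noncomputable def Qml (m l : ℕ) (g n : ℝ) : ℝ :=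
  1 / (g ^ m * (descPochhammer ℝ l).eval (2 * g - 3 + n))

open Filter Topology Finset Polynomial

lemma descPoch_prod (l : ℕ) (x : ℝ) :
    (descPochhammer ℝ l).eval x = ∏ j ∈ Finset.range l, (x - j) := by
  induction l with
  | zero => simp
  | succ k ih => rw [descPochhammer_succ_eval, ih, Finset.prod_range_succ]

lemma key (r : ℕ) (c : ℕ → ℝ) (g₀ C lam : ℝ) (hC : 0 < C) (hlam : 0 < lam)
    (h : ∀ g n : ℕ, g₀ ≤ (g : ℝ) → 1 ≤ n → (n : ℝ) ≤ lam * g →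
      |∑ m ∈ Finset.range (r + 1), c m * Qml m (r - m) g n| < C / (g : ℝ) ^ (r + 1))
    (s : ℝ) (hs0 : 0 < s) (hsl : s < lam) :
    ∑ m ∈ Finset.range (r + 1), c m * (1 / (2 + s)) ^ (r - m) = 0 := by
  have h2s : (0:ℝ) < 2 + s := by linarith
  set n : ℕ → ℕ := fun g => ⌈s * g⌉₊ with hn
  have hinv : Tendsto (fun g : ℕ => 1 / (g:ℝ)) atTop (𝓝 0) :=
    tendsto_one_div_atTop_nhds_zero_nat
  -- n g / g → s
  have hng : Tendsto (fun g : ℕ => (n g : ℝ) / g) atTop (𝓝 s) := by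
    have hub : Tendsto (fun g : ℕ => s + 1 / (g:ℝ)) atTop (𝓝 s) := by
      simpa using tendsto_const_nhds.add hinv
    apply tendsto_of_tendsto_of_tendsto_of_le_of_le' tendsto_const_nhds hub
    · filter_upwards [eventually_ge_atTop 1] with g hg
      have hgpos : (0:ℝ) < g := by exact_mod_cast hg
      rw [le_div_iff₀ hgpos]
      exact Nat.le_ceil (s * g)
    · filter_upwards [eventually_ge_atTop 1] with g hg
      have hgpos : (0:ℝ) < g := by exact_mod_cast hg
      rw [div_le_iff₀ hgpos]
      have h1 : (n g : ℝ) < s * g + 1 := Nat.ceil_lt_add_one (by positivity)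
      have : s * g + 1 = (s + 1/g) * g := by field_simp
      linarith [this ▸ h1]
  -- each factor g/(2g-3+n-j) → 1/(2+s)
  have hfac : ∀ j : ℕ, Tendsto (fun g : ℕ => (g:ℝ) / (2 * g - 3 + n g - j))
      atTop (𝓝 (1 / (2 + s))) := by
    intro j
    have h1 : Tendsto (fun g : ℕ => (2 * (g:ℝ) - 3 + n g - j) / g) atTop (𝓝 (2 + s)) := by
      have : Tendsto (fun g : ℕ => 2 - 3 * (1/(g:ℝ)) + (n g : ℝ)/g - j * (1/(g:ℝ)))
          atTop (𝓝 (2 - 3 * 0 + s - j * 0)) :=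
        ((tendsto_const_nhds.sub (hinv.const_mul 3)).add hng).sub (hinv.const_mul (j:ℝ))
      have h2 : (2:ℝ) - 3 * 0 + s - j * 0 = 2 + s := by ring
      rw [h2] at this
      apply this.congr'
      filter_upwards [eventually_ge_atTop 1] with g hg
      have hgpos : (0:ℝ) < g := by exact_mod_cast hg
      field_simp
    have := h1.inv₀ (ne_of_gt h2s)
    simpa [inv_div, one_div] using this
  -- main tendsto
  set L := ∑ m ∈ Finset.range (r + 1), c m * (1 / (2 + s)) ^ (r - m) with hL
  have hF : Tendsto (fun g : ℕ =>
      (g:ℝ) ^ r * ∑ m ∈ Finset.range (r + 1), c m * Qml m (r - m) g (n g))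
      atTop (𝓝 L) := by
    have hterm : ∀ m ∈ Finset.range (r + 1),
        Tendsto (fun g : ℕ => c m * ((g:ℝ) ^ r * Qml m (r - m) g (n g)))
          atTop (𝓝 (c m * (1 / (2 + s)) ^ (r - m))) := by
      intro m hm
      have hmr : m ≤ r := Nat.lt_succ_iff.mp (Finset.mem_range.mp hm)
      apply Tendsto.const_mul
      have hprod : Tendsto (fun g : ℕ =>
          ∏ j ∈ Finset.range (r - m), (g:ℝ) / (2 * g - 3 + n g - j))
          atTop (𝓝 ((1 / (2 + s)) ^ (r - m))) := by
        have := tendsto_finset_prod (f := fun (j : ℕ) (g : ℕ) =>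
            (g:ℝ) / (2 * g - 3 + n g - j)) (a := fun _ => 1 / (2 + s))
            (Finset.range (r - m)) (fun j _ => hfac j)
        simpa using this
      apply hprod.congr'
      filter_upwards [eventually_ge_atTop 1] with g hg
      have hgpos : (0:ℝ) < g := by exact_mod_cast hg
      rw [Qml, descPoch_prod]
      rw [Finset.prod_div_distrib, Finset.prod_const, Finset.card_range]
      have hpow : (g:ℝ) ^ m * (g:ℝ) ^ (r - m) = (g:ℝ) ^ r := by
        rw [← pow_add, Nat.add_sub_cancel' hmr]
      have hg0 : (g:ℝ) ≠ 0 := ne_of_gt hgpos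
      rw [mul_one_div, ← hpow,
        mul_div_mul_left _ _ (pow_ne_zero m hg0)]
    have := tendsto_finset_sum (Finset.range (r + 1)) hterm
    rw [hL]
    apply this.congr
    intro g
    rw [Finset.mul_sum]
    exact Finset.sum_congr rfl (fun m _ => by ring)
  -- F → 0
  have hF0 : Tendsto (fun g : ℕ =>
      (g:ℝ) ^ r * ∑ m ∈ Finset.range (r + 1), c m * Qml m (r - m) g (n g))
      atTop (𝓝 0) := by
    rw [tendsto_zero_iff_abs_tendsto_zero]
    apply squeeze_zero' (by filter_upwards with g using abs_nonneg _)
      (g := fun g : ℕ => C * (1 / (g:ℝ)))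
    · have hA : ∀ᶠ g : ℕ in atTop, g₀ ≤ (g:ℝ) := by
        obtain ⟨N, hN⟩ := exists_nat_ge g₀
        filter_upwards [eventually_ge_atTop N] with g hg
        exact hN.trans (by exact_mod_cast hg)
      obtain ⟨M, hM⟩ := exists_nat_ge (1 / (lam - s))
      filter_upwards [hA, eventually_ge_atTop 1, eventually_ge_atTop (M + 1)] with g hg0 hg1 hgM
      have hgpos : (0:ℝ) < g := by exact_mod_cast hg1
      have hn1 : 1 ≤ n g := by
        rw [hn]
        exact Nat.one_le_ceil_iff.mpr (by positivity)
      have hnlam : (n g : ℝ) ≤ lam * g := by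
        have h1 : (n g : ℝ) < s * g + 1 := Nat.ceil_lt_add_one (by positivity)
        have h2 : 1 ≤ (lam - s) * g := by
          have hls : 0 < lam - s := by linarith
          have : 1 / (lam - s) ≤ (g:ℝ) := by
            calc (1:ℝ) / (lam - s) ≤ M := hM
              _ ≤ g := by exact_mod_cast Nat.le_of_succ_le hgM
          calc (1:ℝ) = (1 / (lam - s)) * (lam - s) := by field_simp
            _ ≤ g * (lam - s) := by apply mul_le_mul_of_nonneg_right this (le_of_lt hls)
            _ = (lam - s) * g := by ring
        nlinarith
      have hb := h g (n g) hg0 hn1 hnlam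
      have : |(g:ℝ) ^ r * ∑ m ∈ Finset.range (r + 1), c m * Qml m (r - m) g (n g)|
          = (g:ℝ)^r * |∑ m ∈ Finset.range (r + 1), c m * Qml m (r - m) g (n g)| := by
        rw [abs_mul, abs_of_nonneg (by positivity)]
      rw [Function.comp_apply, this]
      have hineq : (g:ℝ)^r * |∑ m ∈ Finset.range (r + 1), c m * Qml m (r - m) g (n g)|
          ≤ (g:ℝ)^r * (C / (g:ℝ)^(r+1)) :=
        mul_le_mul_of_nonneg_left (le_of_lt hb) (by positivity)
      refine hineq.trans (le_of_eq ?_)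
      rw [pow_succ]
      field_simp
    · simpa using hinv.const_mul C
  rw [hL] at hF ⊢
  exact tendsto_nhds_unique hF hF0

/-- If `Q = Σ_{m+ℓ=r} c_m Q_{m,r-m}` satisfies `|Q(g,n)| < C/g^{r+1}` for all integers
`g ≥ g₀` and `1 ≤ n ≤ λg`, then all the coefficients vanish. -/
theorem stmt7 (r : ℕ) (c : ℕ → ℝ) (g₀ C lam : ℝ) (hg₀ : 0 < g₀) (hC : 0 < C)
    (hlam : 0 < lam)
    (h : ∀ g n : ℕ, g₀ ≤ (g : ℝ) → 1 ≤ n → (n : ℝ) ≤ lam * g →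
      |∑ m ∈ Finset.range (r + 1), c m * Qml m (r - m) g n| < C / (g : ℝ) ^ (r + 1)) :
    ∀ m, m ≤ r → c m = 0 := by
  set p : Polynomial ℝ := ∑ m ∈ Finset.range (r + 1), Polynomial.C (c m) * Polynomial.X ^ m
    with hp
  have hroot : ∀ s ∈ Set.Ioo (0:ℝ) lam, p.IsRoot (2 + s) := by
    intro s hs
    obtain ⟨hs0, hsl⟩ := hs
    have h2s : (0:ℝ) < 2 + s := by linarith
    have hkey := key r c g₀ C lam hC hlam h s hs0 hsl
    have heval : p.eval (2 + s) = ∑ m ∈ Finset.range (r + 1), c m * (2 + s) ^ m := by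
      rw [hp, Polynomial.eval_finset_sum]
      exact Finset.sum_congr rfl (fun m _ => by simp)
    rw [Polynomial.IsRoot, heval]
    have hterm : ∀ m ∈ Finset.range (r + 1),
        c m * (2 + s) ^ m = (2 + s) ^ r * (c m * (1 / (2 + s)) ^ (r - m)) := by
      intro m hm
      have hmr : m ≤ r := Nat.lt_succ_iff.mp (Finset.mem_range.mp hm)
      have hy : (2 + s) ^ (r - m) * (2 + s) ^ m = (2 + s) ^ r := by
        rw [← pow_add, Nat.sub_add_cancel hmr]
      have hne : (2 + s) ^ (r - m) ≠ 0 := pow_ne_zero _ (ne_of_gt h2s)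
      rw [div_pow, one_pow, one_div]
      field_simp
      rw [mul_assoc, mul_comm ((2+s)^m) ((2+s)^(r-m)), hy, mul_comm]
    rw [Finset.sum_congr rfl hterm, ← Finset.mul_sum, hkey, mul_zero]
  have hp0 : p = 0 := by
    apply Polynomial.eq_zero_of_infinite_isRoot
    apply Set.Infinite.mono (s := (fun s => 2 + s) '' Set.Ioo (0:ℝ) lam)
    · rintro x ⟨s, hs, rfl⟩
      exact hroot s hs
    · exact (Set.Ioo_infinite hlam).image ((add_right_injective 2).injOn)
  intro m hmr
  have := congrArg (fun q => Polynomial.coeff q m) hp0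
  simp only [hp, Polynomial.finset_sum_coeff, Polynomial.coeff_C_mul,
    Polynomial.coeff_X_pow, Polynomial.coeff_zero] at this
  rw [Finset.sum_congr rfl (fun b _ => by rw [mul_ite, mul_one, mul_zero]),
    Finset.sum_ite_eq] at this
  simpa [Finset.mem_range, Nat.lt_succ_iff, hmr] using this
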